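/- If x is a vertex of a tessellation with vertex pattern (f_1,...,f_N) (the face degrees of the faces incident to x, each f_i ≥ 3, N ≥ 3) and the combinatorial curvature Φ(x) = 1 - N/2 + Σ_{i=1}^N 1/f_i is negative, then Φ(x) ≤ -1/1806. -/

import Mathlib

/-- Combinatorial curvature of a vertex pattern `(f 0, …, f (N-1))`. -/
noncomputable def Phi (N : ℕ) (f : Fin N → ℕ) : ℝ :=
  1 - (N : ℝ) / 2 + ∑ i, (1 : ℝ) / (f i)

private lemma auxInvLe {n m : ℕ} (hm : 0 < m) (h : m ≤ n) : (1:ℝ)/n ≤ 1/m := by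
  apply one_div_le_one_div_of_le (by exact_mod_cast hm)
  exact_mod_cast h

set_option maxHeartbeats 4000000 in
private lemma L3 (a b c : ℕ) (ha : 3 ≤ a) (hab : a ≤ b) (hbc : b ≤ c)
    (h : (1:ℝ)/a + 1/b + 1/c < 1/2) :
    (1:ℝ)/a + 1/b + 1/c ≤ 1/2 - 1/1806 := by
  have hb : 3 ≤ b := le_trans ha hab
  have hc : 3 ≤ c := le_trans hb hbc
  by_cases h7 : 7 ≤ a
  · have ia := auxInvLe (n := a) (m := 7) (by norm_num) h7
    have ib := auxInvLe (n := b) (m := 7) (by norm_num) (le_trans h7 hab)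
    have ic := auxInvLe (n := c) (m := 7) (by norm_num) (le_trans (le_trans h7 hab) hbc)
    push_cast at ia ib ic
    linarith
  push_neg at h7
  by_cases h13 : 13 ≤ b
  · have ia := auxInvLe (n := a) (m := 3) (by norm_num) ha
    have ib := auxInvLe (n := b) (m := 13) (by norm_num) h13
    have ic := auxInvLe (n := c) (m := 13) (by norm_num) (le_trans h13 hbc)
    push_cast at ia ib ic
    linarith
  push_neg at h13
  by_cases h43 : 43 ≤ c
  · have pc : (0:ℝ) < 1/c := by
      have : (0:ℝ) < (c:ℝ) := by exact_mod_cast lt_of_lt_of_le (by norm_num : 0 < 3) hc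
      positivity
    have hab2 : (1:ℝ)/a + 1/b < 1/2 := by linarith
    have key : (1:ℝ)/a + 1/b ≤ 1/2 - 1/42 := by
      revert hab2; interval_cases a <;> interval_cases b <;> norm_num
    have ic := auxInvLe (n := c) (m := 43) (by norm_num) h43
    push_cast at ic
    linarith
  push_neg at h43
  revert h; interval_cases a <;> interval_cases b <;> interval_cases c <;> norm_num

set_option maxHeartbeats 4000000 in
private lemma L4 (a b c d : ℕ) (ha : 3 ≤ a) (hab : a ≤ b) (hbc : b ≤ c) (hcd : c ≤ d)
    (h : (1:ℝ)/a + 1/b + 1/c + 1/d < 1) :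
    (1:ℝ)/a + 1/b + 1/c + 1/d ≤ 1 - 1/1806 := by
  have hb : 3 ≤ b := le_trans ha hab
  have hc : 3 ≤ c := le_trans hb hbc
  have hd : 3 ≤ d := le_trans hc hcd
  by_cases h7 : 7 ≤ c
  · have ia := auxInvLe (n := a) (m := 3) (by norm_num) ha
    have ib := auxInvLe (n := b) (m := 3) (by norm_num) hb
    have ic := auxInvLe (n := c) (m := 7) (by norm_num) h7
    have id := auxInvLe (n := d) (m := 7) (by norm_num) (le_trans h7 hcd)
    push_cast at ia ib ic id
    linarith
  push_neg at h7
  by_cases h13 : 13 ≤ d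
  · have pd : (0:ℝ) < 1/d := by
      have : (0:ℝ) < (d:ℝ) := by exact_mod_cast lt_of_lt_of_le (by norm_num : 0 < 3) hd
      positivity
    have h3' : (1:ℝ)/a + 1/b + 1/c < 1 := by linarith
    have hA : a < 7 := by omega
    have hB : b < 7 := by omega
    have key : (1:ℝ)/a + 1/b + 1/c ≤ 11/12 := by
      revert h3'; interval_cases a <;> interval_cases b <;> interval_cases c <;> norm_num
    have id := auxInvLe (n := d) (m := 13) (by norm_num) h13
    push_cast at id
    linarith
  push_neg at h13
  have hA : a < 7 := by omega
  have hB : b < 7 := by omega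
  revert h; interval_cases a <;> interval_cases b <;> interval_cases c <;> interval_cases d <;>
    norm_num

set_option maxHeartbeats 4000000 in
private lemma L5 (a b c d e : ℕ) (ha : 3 ≤ a) (hab : a ≤ b) (hbc : b ≤ c) (hcd : c ≤ d)
    (hde : d ≤ e) (h : (1:ℝ)/a + 1/b + 1/c + 1/d + 1/e < 3/2) :
    (1:ℝ)/a + 1/b + 1/c + 1/d + 1/e ≤ 3/2 - 1/1806 := by
  have hb : 3 ≤ b := le_trans ha hab
  have hc : 3 ≤ c := le_trans hb hbc
  have hd : 3 ≤ d := le_trans hc hcd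
  have he : 3 ≤ e := le_trans hd hde
  by_cases h5 : 5 ≤ d
  · have ia := auxInvLe (n := a) (m := 3) (by norm_num) ha
    have ib := auxInvLe (n := b) (m := 3) (by norm_num) hb
    have ic := auxInvLe (n := c) (m := 3) (by norm_num) hc
    have id := auxInvLe (n := d) (m := 5) (by norm_num) h5
    have ie' := auxInvLe (n := e) (m := 5) (by norm_num) (le_trans h5 hde)
    push_cast at ia ib ic id ie'
    linarith
  push_neg at h5
  by_cases h7 : 7 ≤ e
  · have pe : (0:ℝ) < 1/e := by
      have : (0:ℝ) < (e:ℝ) := by exact_mod_cast lt_of_lt_of_le (by norm_num : 0 < 3) he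
      positivity
    have h4' : (1:ℝ)/a + 1/b + 1/c + 1/d < 3/2 := by linarith
    have hA : a < 5 := by omega
    have hB : b < 5 := by omega
    have hC : c < 5 := by omega
    have key : (1:ℝ)/a + 1/b + 1/c + 1/d ≤ 4/3 := by
      revert h4'; interval_cases a <;> interval_cases b <;> interval_cases c <;> interval_cases d <;>
        norm_num
    have ie' := auxInvLe (n := e) (m := 7) (by norm_num) h7
    push_cast at ie'
    linarith
  push_neg at h7
  have hA : a < 5 := by omega
  have hB : b < 5 := by omega
  have hC : c < 5 := by omega
  revert h; interval_cases a <;> interval_cases b <;> interval_cases c <;> interval_cases d <;>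
    interval_cases e <;> norm_num

private lemma L6 (a b c d e g : ℕ) (ha : 3 ≤ a) (hab : a ≤ b) (hbc : b ≤ c) (hcd : c ≤ d)
    (hde : d ≤ e) (heg : e ≤ g)
    (h : (1:ℝ)/a + 1/b + 1/c + 1/d + 1/e + 1/g < 2) :
    (1:ℝ)/a + 1/b + 1/c + 1/d + 1/e + 1/g ≤ 2 - 1/1806 := by
  have hb : 3 ≤ b := le_trans ha hab
  have hc : 3 ≤ c := le_trans hb hbc
  have hd : 3 ≤ d := le_trans hc hcd
  have he : 3 ≤ e := le_trans hd hde
  have hg : 3 ≤ g := le_trans he heg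
  by_cases h4 : 4 ≤ g
  · have ia := auxInvLe (n := a) (m := 3) (by norm_num) ha
    have ib := auxInvLe (n := b) (m := 3) (by norm_num) hb
    have ic := auxInvLe (n := c) (m := 3) (by norm_num) hc
    have id := auxInvLe (n := d) (m := 3) (by norm_num) hd
    have ie' := auxInvLe (n := e) (m := 3) (by norm_num) he
    have ig := auxInvLe (n := g) (m := 4) (by norm_num) h4
    push_cast at ia ib ic id ie' ig
    linarith
  push_neg at h4
  have ha' : a = 3 := by omega
  have hb' : b = 3 := by omega
  have hc' : c = 3 := by omega
  have hd' : d = 3 := by omega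
  have he' : e = 3 := by omega
  have hg' : g = 3 := by omega
  subst ha' hb' hc' hd' he' hg'
  norm_num at h

set_option maxHeartbeats 4000000 in
/-- Higuchi's bound: a vertex pattern with negative combinatorial curvature has
curvature at most `-1/1806`. -/
theorem stmt0 (N : ℕ) (hN : 3 ≤ N) (f : Fin N → ℕ) (hmono : Monotone f)
    (h3 : ∀ i, 3 ≤ f i) (hneg : Phi N f < 0) :
    Phi N f ≤ -(1 / 1806) := by
  rcases lt_or_ge N 7 with hN7 | hN7
  · interval_cases N
    · -- N = 3
      simp only [Phi, Fin.sum_univ_three] at hneg ⊢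
      push_cast at hneg ⊢
      have := L3 (f 0) (f 1) (f 2) (h3 0)
        (hmono (by decide : (0 : Fin 3) ≤ 1)) (hmono (by decide : (1 : Fin 3) ≤ 2))
        (by linarith)
      linarith
    · -- N = 4
      simp only [Phi, Fin.sum_univ_four] at hneg ⊢
      push_cast at hneg ⊢
      have := L4 (f 0) (f 1) (f 2) (f 3) (h3 0)
        (hmono (by decide : (0 : Fin 4) ≤ 1)) (hmono (by decide : (1 : Fin 4) ≤ 2))
        (hmono (by decide : (2 : Fin 4) ≤ 3))
        (by linarith)
      linarith
    · -- N = 5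
      simp only [Phi, Fin.sum_univ_five] at hneg ⊢
      push_cast at hneg ⊢
      have := L5 (f 0) (f 1) (f 2) (f 3) (f 4) (h3 0)
        (hmono (by decide : (0 : Fin 5) ≤ 1)) (hmono (by decide : (1 : Fin 5) ≤ 2))
        (hmono (by decide : (2 : Fin 5) ≤ 3)) (hmono (by decide : (3 : Fin 5) ≤ 4))
        (by linarith)
      linarith
    · -- N = 6
      simp only [Phi, Fin.sum_univ_six] at hneg ⊢
      push_cast at hneg ⊢
      have := L6 (f 0) (f 1) (f 2) (f 3) (f 4) (f 5) (h3 0)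
        (hmono (by decide : (0 : Fin 6) ≤ 1)) (hmono (by decide : (1 : Fin 6) ≤ 2))
        (hmono (by decide : (2 : Fin 6) ≤ 3)) (hmono (by decide : (3 : Fin 6) ≤ 4))
        (hmono (by decide : (4 : Fin 6) ≤ 5))
        (by linarith)
      linarith
  · -- N ≥ 7
    have hsum : ∑ i, (1:ℝ)/(f i) ≤ ∑ _i : Fin N, (1:ℝ)/3 := by
      apply Finset.sum_le_sum
      intro i _
      exact_mod_cast auxInvLe (n := f i) (m := 3) (by norm_num) (h3 i)
    rw [Finset.sum_const, Finset.card_univ, Fintype.card_fin, nsmul_eq_mul] at hsum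
    have hN' : (7:ℝ) ≤ (N:ℝ) := by exact_mod_cast hN7
    simp only [Phi] at hneg ⊢
    linarith
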